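/- Let Γ ⊆ ℂ² be a discrete additive subgroup which is free of rank 3. Then there exist surjective ℂ-linear maps π₁, π₂ : ℂ² → ℂ such that π₁(Γ) and π₂(Γ) are lattices in ℂ and there is no μ ∈ ℂ, μ ≠ 0, with μ·π₁(Γ) = π₂(Γ). (That is, ℂ²/Γ always has two non-isomorphic quotient elliptic curves.) -/

import Mathlib

open Complex Submodule Module

noncomputable section AuxQ10

/-- The "cross product" functional with kernel `ℂ • v`. -/
def crossQ10 (v : ℂ × ℂ) : (ℂ × ℂ) →ₗ[ℂ] ℂ where
  toFun z := v.2 * z.1 - v.1 * z.2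
  map_add' x y := by simp; ring
  map_smul' c x := by simp; ring

@[simp] lemma crossQ10_apply (v z : ℂ × ℂ) : crossQ10 v z = v.2 * z.1 - v.1 * z.2 := rfl

lemma crossQ10_self (v : ℂ × ℂ) : crossQ10 v v = 0 := by simp [mul_comm]

lemma crossQ10_surjective {v : ℂ × ℂ} (hv : v ≠ 0) : Function.Surjective (crossQ10 v) := by
  intro c
  rcases eq_or_ne v.2 0 with h2 | h2
  · have h1 : v.1 ≠ 0 := by
      intro h1; exact hv (Prod.ext h1 h2)
    exact ⟨(0, -c / v.1), by rw [crossQ10_apply]; field_simp; ring⟩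
  · exact ⟨(c / v.2, 0), by rw [crossQ10_apply]; field_simp; ring⟩

lemma crossQ10_eq_zero {v z : ℂ × ℂ} (hv : v ≠ 0) (h : crossQ10 v z = 0) :
    ∃ c : ℂ, z = c • v := by
  simp only [crossQ10_apply, sub_eq_zero] at h
  rcases eq_or_ne v.1 0 with h1 | h1
  · have h2 : v.2 ≠ 0 := fun h2 => hv (Prod.ext h1 h2)
    refine ⟨z.2 / v.2, ?_⟩
    have hz1 : z.1 = 0 := by
      have : v.2 * z.1 = 0 := by rw [h, h1, zero_mul]
      exact (mul_eq_zero.mp this).resolve_left h2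
    apply Prod.ext <;> simp [hz1, h1] <;> field_simp
  · refine ⟨z.1 / v.1, ?_⟩
    apply Prod.ext <;> simp <;> field_simp
    linear_combination -h


lemma imMulConj_ne_zero_of_indep {u v : ℂ} (h : LinearIndependent ℝ ![u, v]) :
    (u * (starRingEnd ℂ) v).im ≠ 0 := by
  intro h0
  have hv : v ≠ 0 := by
    have := h.ne_zero 1
    simpa using this
  have h2 : u * (starRingEnd ℂ) v = ((u * (starRingEnd ℂ) v).re : ℂ) := by
    rw [Complex.ext_iff]
    simp [h0]
  have h1 : (Complex.normSq v : ℂ) * u = ((u * (starRingEnd ℂ) v).re : ℂ) * v := by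
    have h3 : u * (v * (starRingEnd ℂ) v) = (u * (starRingEnd ℂ) v) * v := by ring
    rw [Complex.mul_conj, h2] at h3
    linear_combination h3
  have hcombo : (Complex.normSq v) • u + (-((u * (starRingEnd ℂ) v).re)) • v = 0 := by
    rw [Complex.real_smul, Complex.real_smul, Complex.ofReal_neg]
    linear_combination h1
  have := (LinearIndependent.pair_iff.mp h _ _ hcombo).1
  exact (Complex.normSq_pos.mpr hv).ne' this

lemma indep_of_imMulConj {u v : ℂ} (h : (u * (starRingEnd ℂ) v).im ≠ 0) :
    LinearIndependent ℝ ![u, v] := by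
  have hv : v ≠ 0 := by
    rintro rfl; simp at h
  rw [LinearIndependent.pair_iff]
  intro s t hst
  have him : ((s • u + t • v) * (starRingEnd ℂ) v).im = s * (u * (starRingEnd ℂ) v).im := by
    rw [add_mul]
    simp only [Complex.real_smul]
    rw [mul_assoc, mul_assoc, Complex.mul_conj]
    simp [Complex.mul_im]
  rw [hst, zero_mul, Complex.zero_im] at him
  have hs : s = 0 := by
    rcases mul_eq_zero.mp him.symm with h1 | h1
    · exact h1
    · exact absurd h1 h
  refine ⟨hs, ?_⟩
  rw [hs, zero_smul, zero_add] at hst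
  have := smul_eq_zero.mp hst
  rcases this with h1 | h1
  · exact h1
  · exact absurd h1 hv

lemma absLB1 {s : ℂ} (a b : ℤ) (h : (a:ℂ) * s + b ≠ 0) :
    min 1 |s.im| ≤ ‖(a:ℂ) * s + b‖ := by
  rcases eq_or_ne a 0 with ha | ha
  · have hb : b ≠ 0 := by
      rintro rfl; simp [ha] at h
    have : (1:ℝ) ≤ ‖(a:ℂ) * s + b‖ := by
      rw [ha]
      push_cast
      rw [zero_mul, zero_add, Complex.norm_intCast]
      exact_mod_cast Int.one_le_abs hb
    exact le_trans (min_le_left _ _) this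
  · have him : ((a:ℂ) * s + b).im = a * s.im := by simp
    have h1 : |s.im| ≤ |((a:ℂ) * s + b).im| := by
      rw [him, abs_mul]
      have : (1:ℝ) ≤ |(a:ℝ)| := by exact_mod_cast Int.one_le_abs ha
      nlinarith [abs_nonneg s.im]
    exact le_trans (min_le_right _ _)
      (le_trans h1 (Complex.abs_im_le_norm _))

lemma absLB2 (σ : ℂ) (a b : ℤ) :
    |(b:ℝ)| * |σ.im| ≤ ‖(a:ℂ) * σ + b‖ * ‖σ‖ := by
  have key : (((a:ℂ) * σ + b) * (starRingEnd ℂ) σ).im = (b:ℝ) * (-σ.im) := by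
    rw [add_mul, mul_assoc, Complex.mul_conj]
    simp [Complex.mul_im]
  calc |(b:ℝ)| * |σ.im| = |(((a:ℂ) * σ + b) * (starRingEnd ℂ) σ).im| := by
        rw [key, abs_mul, abs_neg]
    _ ≤ ‖((a:ℂ) * σ + b) * (starRingEnd ℂ) σ‖ := Complex.abs_im_le_norm _
    _ = ‖(a:ℂ) * σ + b‖ * ‖σ‖ := by
        rw [norm_mul, Complex.norm_conj]

/-- The core arithmetic refutation. -/
lemma coreQ10 (s σ : ℂ)
    (C : (‖σ‖)^2 * max (‖s‖) 1 < min 1 |s.im| * |σ.im|)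
    (μ' : ℂ) (hμ' : μ' ≠ 0)
    (h1 : ∃ a b : ℤ, μ' * ((a:ℂ) * s + b) = σ)
    (h2 : ∃ a b : ℤ, -s * μ' = (a:ℂ) * σ + b)
    (h3 : ∃ a b : ℤ, μ' = (a:ℂ) * σ + b) : False := by
  have hLHS : 0 ≤ (‖σ‖)^2 * max (‖s‖) 1 :=
    mul_nonneg (sq_nonneg _) (le_trans zero_le_one (le_max_right _ _))
  have hsim : s.im ≠ 0 := by
    intro h0
    rw [h0, abs_zero, min_eq_right (le_of_lt one_pos)] at C
    rw [zero_mul] at C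
    linarith
  have hσim : σ.im ≠ 0 := by
    intro h0
    rw [h0, abs_zero, mul_zero] at C
    linarith
  have hm₀pos : 0 < min 1 |s.im| := lt_min one_pos (abs_pos.mpr hsim)
  have hσ : σ ≠ 0 := fun h0 => hσim (by rw [h0]; rfl)
  obtain ⟨a, b, hab⟩ := h1
  have habne : (a:ℂ) * s + b ≠ 0 := by
    intro h0; rw [h0, mul_zero] at hab; exact hσ hab.symm
  have hμ'le : ‖μ'‖ * min 1 |s.im| ≤ ‖σ‖ := by
    calc ‖μ'‖ * min 1 |s.im|
        ≤ ‖μ'‖ * ‖(a:ℂ)*s+b‖ :=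
          mul_le_mul_of_nonneg_left (absLB1 a b habne) (norm_nonneg _)
      _ = ‖σ‖ := by rw [← norm_mul, hab]
  obtain ⟨a₁, b₁, hb1⟩ := h2
  obtain ⟨a₂, b₂, hb2⟩ := h3
  have habs : 0 ≤ ‖σ‖ := norm_nonneg _
  have habsμ : 0 ≤ ‖μ'‖ := norm_nonneg _
  have habss : 0 ≤ ‖s‖ := norm_nonneg _
  have key1 : |(b₁:ℝ)| * |σ.im| ≤ ‖s‖ * ‖μ'‖ * ‖σ‖ := by
    have := absLB2 σ a₁ b₁
    rw [← hb1, norm_mul, norm_neg] at this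
    linarith
  have key2 : |(b₂:ℝ)| * |σ.im| ≤ ‖μ'‖ * ‖σ‖ := by
    have := absLB2 σ a₂ b₂
    rw [← hb2] at this
    exact this
  have hmaxσ : (‖s‖) * ‖σ‖ ^ 2 ≤ max (‖s‖) 1 * ‖σ‖ ^ 2 :=
    mul_le_mul_of_nonneg_right (le_max_left _ _) (sq_nonneg _)
  have hmax1 : ‖σ‖ ^ 2 ≤ max (‖s‖) 1 * ‖σ‖ ^ 2 := by
    nlinarith [sq_nonneg (‖σ‖), le_max_right (‖s‖) 1]
  have hb1z : b₁ = 0 := by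
    by_contra hb
    have h1le : (1:ℝ) ≤ |(b₁:ℝ)| := by exact_mod_cast Int.one_le_abs hb
    have e1 : |σ.im| ≤ ‖s‖ * ‖μ'‖ * ‖σ‖ := by
      nlinarith [key1, abs_nonneg σ.im]
    have e2 : min 1 |s.im| * |σ.im| ≤ ‖s‖ * ‖σ‖ ^ 2 := by
      have step := mul_le_mul_of_nonneg_left hμ'le (mul_nonneg habss habs)
      nlinarith [mul_le_mul_of_nonneg_left e1 hm₀pos.le]
    nlinarith [C]
  have hb2z : b₂ = 0 := by
    by_contra hb
    have h1le : (1:ℝ) ≤ |(b₂:ℝ)| := by exact_mod_cast Int.one_le_abs hb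
    have e1 : |σ.im| ≤ ‖μ'‖ * ‖σ‖ := by
      nlinarith [key2, abs_nonneg σ.im]
    have e2 : min 1 |s.im| * |σ.im| ≤ ‖σ‖ ^ 2 := by
      have step := mul_le_mul_of_nonneg_left hμ'le habs
      nlinarith [mul_le_mul_of_nonneg_left e1 hm₀pos.le]
    nlinarith [C]
  rw [hb1z] at hb1
  rw [hb2z] at hb2
  push_cast at hb1 hb2
  rw [add_zero] at hb1 hb2
  have hcancel : (-s * (a₂:ℂ) - (a₁:ℂ)) * σ = 0 := by
    rw [sub_mul, mul_assoc, ← hb2, hb1]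
    ring
  have hkey : -s * (a₂:ℂ) = (a₁:ℂ) := by
    rcases mul_eq_zero.mp hcancel with h0 | h0
    · linear_combination h0
    · exact absurd h0 hσ
  have ha₂ : (a₂:ℂ) ≠ 0 := by
    intro h0; rw [h0, zero_mul] at hb2; exact hμ' hb2
  have hseq : s = ((-(a₁:ℝ)/(a₂:ℝ) : ℝ) : ℂ) := by
    have ha₂' : (a₂:ℝ) ≠ 0 := by exact_mod_cast fun h => ha₂ (by exact_mod_cast h)
    push_cast
    field_simp
    linear_combination -hkey
  apply hsim
  rw [hseq, Complex.ofReal_im]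


open Submodule in
lemma finrank_discreteQ10 {E : Type*} [NormedAddCommGroup E]
    [NormedSpace ℝ E] [FiniteDimensional ℝ E] (L : Submodule ℤ E) [DiscreteTopology L] :
    Module.finrank ℤ L = Module.finrank ℝ (span ℝ (L : Set E)) := by
  let f := (span ℝ (L : Set E)).subtype
  let L₀ := L.comap (f.restrictScalars ℤ)
  have h_img : f '' L₀ = L := by
    rw [← LinearMap.coe_restrictScalars ℤ f, ← Submodule.map_coe (f.restrictScalars ℤ),
      Submodule.map_comap_eq_self]
    exact fun x hx ↦ LinearMap.mem_range.mpr ⟨⟨x, Submodule.subset_span hx⟩, rfl⟩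
  have hd : DiscreteTopology L₀ := by
    refine DiscreteTopology.preimage_of_continuous_injective (L : Set E) ?_ (injective_subtype _)
    exact LinearMap.continuous_of_finiteDimensional f
  have hz : IsZLattice ℝ L₀ := ⟨by
    rw [← (Submodule.map_injective_of_injective (injective_subtype _)).eq_iff,
      Submodule.map_span, Submodule.map_top, range_subtype, h_img]⟩
  have hrank := ZLattice.rank ℝ L₀
  have hmap : L₀.map (f.restrictScalars ℤ) = L := SetLike.ext'_iff.mpr h_img
  have e : L₀ ≃ₗ[ℤ] L := by
    refine (Submodule.equivMapOfInjective (f.restrictScalars ℤ) ?_ L₀).trans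
      (LinearEquiv.ofEq _ _ hmap)
    exact injective_subtype _
  rw [← e.finrank_eq, hrank]

open Submodule in
lemma indep_real_of_discreteQ10 (Γ : AddSubgroup (ℂ × ℂ)) (hdisc : DiscreteTopology Γ)
    (b3 : Basis (Fin 3) ℤ Γ) :
    LinearIndependent ℝ (fun i => (b3 i : ℂ × ℂ)) := by
  set δ : Fin 3 → ℂ × ℂ := fun i => (b3 i : ℂ × ℂ) with hδ
  have hker : LinearMap.ker (Γ.subtype.toIntLinearMap) = ⊥ := by
    rw [LinearMap.ker_eq_bot]; exact Subtype.val_injective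
  have hli : LinearIndependent ℤ δ := by
    have h := LinearIndependent.map' (f := Γ.subtype.toIntLinearMap) b3.linearIndependent hker
    exact h
  set L : Submodule ℤ (ℂ × ℂ) := span ℤ (Set.range δ) with hL
  have hLΓ : (L : Set (ℂ × ℂ)) = (Γ : Set (ℂ × ℂ)) := by
    apply subset_antisymm
    · have : L ≤ Γ.toIntSubmodule := by
        rw [hL, Submodule.span_le]
        rintro x ⟨i, rfl⟩
        exact (b3 i).2
      intro x hx
      exact this hx
    · intro x hx
      have hrep := b3.sum_repr ⟨x, hx⟩
      have : x = ∑ i, (b3.repr ⟨x, hx⟩ i) • δ i := by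
        have h2 := congrArg (Subtype.val : ↥Γ → ℂ × ℂ) hrep
        rw [show ((⟨x, hx⟩ : ↥Γ) : ℂ × ℂ) = x from rfl] at h2
        have hsum : ((∑ i, (b3.repr ⟨x, hx⟩) i • b3 i : ↥Γ) : ℂ × ℂ)
            = ∑ i, (b3.repr ⟨x, hx⟩) i • δ i := by
          push_cast
          rfl
        rw [← hsum]
        exact h2.symm
      rw [this]
      exact sum_mem fun i _ => smul_mem _ _ (subset_span ⟨i, rfl⟩)
  have hdL : DiscreteTopology L := by
    exact DiscreteTopology.of_subset (s := (Γ : Set (ℂ × ℂ))) hdisc hLΓ.le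
  have hfr : Module.finrank ℤ L = 3 := by
    rw [Module.finrank_eq_card_basis (Basis.span hli)]
    simp
  have hfr2 := finrank_discreteQ10 L
  have hspan : span ℝ (L : Set (ℂ × ℂ)) = span ℝ (Set.range δ) := by
    rw [hL, span_span_of_tower]
  rw [linearIndependent_iff_card_eq_finrank_span]
  rw [Set.finrank, ← hspan, ← hfr2, hfr]
  simp

open Submodule in
lemma exists_not_in_spanQ10 {δ : Fin 3 → ℂ × ℂ} (h : LinearIndependent ℝ δ) :
    ∃ j, Complex.I • δ j ∉ span ℝ (Set.range δ) := by
  by_contra hc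
  push_neg at hc
  set V := span ℝ (Set.range δ) with hV
  have hIV : ∀ v ∈ V, Complex.I • v ∈ V := by
    intro v hv
    induction hv using span_induction with
    | mem x hx =>
      obtain ⟨i, rfl⟩ := hx
      exact hc i
    | zero => simpa using V.zero_mem
    | add x y _ _ hx hy => rw [smul_add]; exact V.add_mem hx hy
    | smul r x _ hx => rw [smul_comm]; exact V.smul_mem r hx
  have hCsmul : ∀ (c : ℂ), ∀ v ∈ V, c • v ∈ V := by
    intro c v hv
    have hdecomp : c • v = c.re • v + c.im • (Complex.I • v) := by
      rw [← algebraMap_smul ℂ c.re v, ← algebraMap_smul ℂ c.im (Complex.I • v),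
        ← mul_smul, ← add_smul]
      congr 1
      simp [Complex.ext_iff, Algebra.algebraMap_eq_smul_one, Complex.real_smul]
    rw [hdecomp]
    exact V.add_mem (V.smul_mem _ hv) (V.smul_mem _ (hIV v hv))
  let V' : Submodule ℂ (ℂ × ℂ) :=
    { carrier := (V : Set (ℂ × ℂ))
      add_mem' := fun ha hb => V.add_mem ha hb
      zero_mem' := V.zero_mem
      smul_mem' := fun c v hv => hCsmul c v hv }
  have hVV' : V = V'.restrictScalars ℝ := by
    ext x
    rfl
  have h3 : Module.finrank ℝ V = 3 := by
    rw [hV, finrank_span_eq_card h]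
    simp
  have heven : Module.finrank ℝ (V'.restrictScalars ℝ) = 2 * Module.finrank ℂ V' := by
    exact finrank_real_of_complex V'
  rw [hVV'] at h3
  omega

open Submodule Module in
lemma lattice_packageQ10 {u v : ℂ} (h : LinearIndependent ℝ ![u, v]) (S : AddSubgroup ℂ)
    (hmem : ∀ x : ℂ, x ∈ S ↔ ∃ a b : ℤ, x = a • u + b • v) :
    DiscreteTopology S ∧ Nonempty (Basis (Fin 2) ℤ S) := by
  have hcard : Fintype.card (Fin 2) = finrank ℝ ℂ := by
    simp [Complex.finrank_real_complex]
  let bR : Basis (Fin 2) ℝ ℂ := basisOfLinearIndependentOfCardEqFinrank h hcard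
  have hbR : ⇑bR = ![u, v] := coe_basisOfLinearIndependentOfCardEqFinrank h hcard
  have hrange : Set.range ⇑bR = {u, v} := by
    rw [hbR]
    ext y
    simp [Fin.exists_fin_two]
    tauto
  have hSset : (S : Set ℂ) = ((span ℤ (Set.range ⇑bR) : Submodule ℤ ℂ) : Set ℂ) := by
    ext x
    simp only [SetLike.mem_coe, hmem, hrange, mem_span_pair]
    constructor
    · rintro ⟨a, b, rfl⟩
      exact ⟨a, b, rfl⟩
    · rintro ⟨a, b, rfl⟩
      exact ⟨a, b, rfl⟩
  have hdisc : DiscreteTopology S := by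
    have : DiscreteTopology (span ℤ (Set.range ⇑bR)) := inferInstance
    exact DiscreteTopology.of_subset (s := ((span ℤ (Set.range ⇑bR) : Submodule ℤ ℂ) : Set ℂ))
      this hSset.le
  have hu : u ∈ S := (hmem u).mpr ⟨1, 0, by simp⟩
  have hv : v ∈ S := (hmem v).mpr ⟨0, 1, by simp⟩
  let w : Fin 2 → S := ![⟨u, hu⟩, ⟨v, hv⟩]
  have hindZ : LinearIndependent ℤ ![u, v] := by
    refine LinearIndependent.restrict_scalars (R := ℤ) (K := ℝ) ?_ h
    intro a b hab
    simpa using hab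
  have hwind : LinearIndependent ℤ w := by
    have hcomp : (Subtype.val : S → ℂ) ∘ w = ![u, v] := by
      ext i
      fin_cases i <;> rfl
    refine LinearIndependent.of_comp (S.subtype.toIntLinearMap) ?_
    show LinearIndependent ℤ (⇑S.subtype.toIntLinearMap ∘ w)
    have : ⇑S.subtype.toIntLinearMap ∘ w = ![u, v] := hcomp
    rw [this]
    exact hindZ
  have hwspan : ⊤ ≤ span ℤ (Set.range w) := by
    rintro ⟨x, hx⟩ -
    obtain ⟨a, b, rfl⟩ := (hmem x).mp hx
    have : (⟨(a : ℤ) • u + (b : ℤ) • v, hx⟩ : S) = a • w 0 + b • w 1 := by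
      ext
      simp [w]
    rw [this]
    exact add_mem (smul_mem _ _ (subset_span ⟨0, rfl⟩)) (smul_mem _ _ (subset_span ⟨1, rfl⟩))
  exact ⟨hdisc, ⟨Basis.mk hwind hwspan⟩⟩

set_option maxHeartbeats 1600000 in
open Submodule Module in
/-- Every semi-torus `ℂ²/Γ` with `Γ` discrete of rank 3 admits two
non-isomorphic quotient elliptic curves. -/
theorem exists_nonisomorphic_quotients
    (Γ : AddSubgroup (ℂ × ℂ)) (hdisc : DiscreteTopology Γ)
    (hfree : Nonempty (Basis (Fin 3) ℤ Γ)) :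
    ∃ π₁ π₂ : (ℂ × ℂ) →ₗ[ℂ] ℂ, Function.Surjective π₁ ∧ Function.Surjective π₂ ∧
      DiscreteTopology (Γ.map π₁.toAddMonoidHom) ∧
      Nonempty (Basis (Fin 2) ℤ (Γ.map π₁.toAddMonoidHom)) ∧
      DiscreteTopology (Γ.map π₂.toAddMonoidHom) ∧
      Nonempty (Basis (Fin 2) ℤ (Γ.map π₂.toAddMonoidHom)) ∧
      ¬ ∃ μ : ℂ, μ ≠ 0 ∧
        (fun x => μ * x) '' ((Γ.map π₁.toAddMonoidHom : AddSubgroup ℂ) : Set ℂ) =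
          ((Γ.map π₂.toAddMonoidHom : AddSubgroup ℂ) : Set ℂ) := by
  classical
  obtain ⟨b0⟩ := hfree
  have hindep0 := indep_real_of_discreteQ10 Γ hdisc b0
  obtain ⟨j, hj⟩ := exists_not_in_spanQ10 hindep0
  set e : Equiv.Perm (Fin 3) := Equiv.swap (1 : Fin 3) j with he
  set c : Basis (Fin 3) ℤ Γ := b0.reindex e with hc
  set δ : Fin 3 → ℂ × ℂ := fun i => (c i : ℂ × ℂ) with hδ
  have hδe : δ = (fun i => (b0 i : ℂ × ℂ)) ∘ e.symm := by
    funext i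
    simp [hδ, hc, Basis.reindex_apply]
  have hindep : LinearIndependent ℝ δ := by
    rw [hδe]
    exact hindep0.comp _ e.symm.injective
  have hrangeδ : Set.range δ = Set.range (fun i => (b0 i : ℂ × ℂ)) := by
    rw [hδe, Set.range_comp, Equiv.range_eq_univ, Set.image_univ]
  have hj1 : Complex.I • δ 1 ∉ span ℝ (Set.range δ) := by
    have h1 : δ 1 = (b0 j : ℂ × ℂ) := by
      rw [hδe]
      simp [he, Equiv.symm_swap, Equiv.swap_apply_left]
    rw [h1, hrangeδ]
    exact hj
  -- membership in Γ as integer combinations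
  have hmemΓ : ∀ x : ℂ × ℂ, x ∈ Γ → ∃ k : Fin 3 → ℤ,
      x = k 0 • δ 0 + k 1 • δ 1 + k 2 • δ 2 := by
    intro x hx
    refine ⟨fun i => c.repr ⟨x, hx⟩ i, ?_⟩
    have hrep := c.sum_repr ⟨x, hx⟩
    have h2 := congrArg (Subtype.val : ↥Γ → ℂ × ℂ) hrep
    rw [show ((⟨x, hx⟩ : ↥Γ) : ℂ × ℂ) = x from rfl] at h2
    have hsum : ((∑ i, (c.repr ⟨x, hx⟩) i • c i : ↥Γ) : ℂ × ℂ)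
        = ∑ i, (c.repr ⟨x, hx⟩) i • δ i := by
      push_cast
      rfl
    rw [hsum] at h2
    rw [Fin.sum_univ_three] at h2
    simpa using h2.symm
  have hδΓ : ∀ i, δ i ∈ Γ := fun i => (c i).2
  have hδ1ne : δ 1 ≠ 0 := hindep.ne_zero 1
  -- first projection
  set f : (ℂ × ℂ) →ₗ[ℂ] ℂ := crossQ10 (δ 1) with hf
  set A : ℂ := f (δ 0) with hA
  set B : ℂ := f (δ 2) with hB
  have hfδ1 : f (δ 1) = 0 := crossQ10_self _
  -- A B independent over ℝ
  have hABind : LinearIndependent ℝ ![A, B] := by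
    rw [LinearIndependent.pair_iff]
    intro a b hab
    have hker : f (a • δ 0 + b • δ 2) = 0 := by
      rw [map_add, LinearMap.map_smul_of_tower, LinearMap.map_smul_of_tower, ← hA, ← hB, hab]
    obtain ⟨cc, hcc⟩ := crossQ10_eq_zero hδ1ne hker
    have hdecomp : cc • δ 1 = cc.re • δ 1 + cc.im • (Complex.I • δ 1) := by
      rw [← algebraMap_smul ℂ cc.re (δ 1), ← algebraMap_smul ℂ cc.im (Complex.I • δ 1),
        ← mul_smul, ← add_smul]
      congr 1
      simp [Complex.ext_iff, Algebra.algebraMap_eq_smul_one, Complex.real_smul]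
    by_cases him : cc.im = 0
    · have h6 : a • δ 0 + b • δ 2 = cc.re • δ 1 := by
        rw [hcc, hdecomp, him, zero_smul, add_zero]
      have hz : a • δ 0 + (-cc.re) • δ 1 + b • δ 2 = 0 := by
        have h7 : a • δ 0 + (-cc.re) • δ 1 + b • δ 2 = (a • δ 0 + b • δ 2) - cc.re • δ 1 := by
          rw [neg_smul]; abel
        rw [h7, h6, sub_self]
      have hall := Fintype.linearIndependent_iff.mp hindep ![a, -cc.re, b] ?_
      · exact ⟨by simpa using hall 0, by simpa using hall 2⟩
      · rw [Fin.sum_univ_three]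
        simpa using hz
    · exfalso
      apply hj1
      have h6 : cc.re • δ 1 + cc.im • (Complex.I • δ 1) = a • δ 0 + b • δ 2 := by
        rw [← hdecomp, ← hcc]
      have h5 : cc.im • (Complex.I • δ 1) = a • δ 0 + (-cc.re) • δ 1 + b • δ 2 := by
        have h7 : cc.im • (Complex.I • δ 1) = (a • δ 0 + b • δ 2) - cc.re • δ 1 := by
          rw [← h6]; abel
        rw [h7, neg_smul]; abel
      have h8 : Complex.I • δ 1 =
          (cc.im)⁻¹ • (a • δ 0 + (-cc.re) • δ 1 + b • δ 2) := by
        rw [eq_inv_smul_iff₀ him, h5]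
      rw [h8]
      refine Submodule.smul_mem _ _ ?_
      refine add_mem (add_mem ?_ ?_) ?_ <;>
        exact Submodule.smul_mem _ _ (subset_span ⟨_, rfl⟩)
  have hBne : B ≠ 0 := by
    have := hABind.ne_zero 1
    simpa using this
  have hAne : A ≠ 0 := by
    have := hABind.ne_zero 0
    simpa using this
  -- the scalar s
  set s : ℂ := -(A / B) with hs
  have hsB : -s * B = A := by
    rw [hs]
    field_simp
  have hsim : s.im ≠ 0 := by
    intro h0
    have hABreal : (A / B).im = 0 := by
      have : s.im = -(A / B).im := by rw [hs]; simp
      rw [h0] at this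
      linarith [this]
    have hABeq : A = ((A / B).re : ℂ) * B := by
      have h1 : A / B = ((A / B).re : ℂ) := by
        rw [Complex.ext_iff]
        simp [hABreal]
      rw [← h1]
      field_simp
    have := (LinearIndependent.pair_iff.mp hABind 1 (-(A / B).re) ?_).1
    · norm_num at this
    · rw [Complex.real_smul, Complex.real_smul]
      push_cast
      linear_combination hABeq
  -- the vector identity
  set dA : ℂ := -((δ 0).1 * (δ 2).2 - (δ 0).2 * (δ 2).1) with hdA
  have hrel : B • δ 0 = dA • δ 1 + A • δ 2 := by
    have hA' : A = (δ 1).2 * (δ 0).1 - (δ 1).1 * (δ 0).2 := rfl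
    have hB' : B = (δ 1).2 * (δ 2).1 - (δ 1).1 * (δ 2).2 := rfl
    apply Prod.ext <;>
      simp only [Prod.smul_fst, Prod.smul_snd, Prod.fst_add, Prod.snd_add, smul_eq_mul,
        hA', hB', hdA] <;> ring
  -- choice of n
  have hK := imMulConj_ne_zero_of_indep hABind
  set K : ℝ := (A * (starRingEnd ℂ) B).im with hKdef
  set J : ℝ := (A * (starRingEnd ℂ) dA).im with hJdef
  set m₀ : ℝ := min 1 |s.im| with hm₀
  have hm₀pos : 0 < m₀ := lt_min one_pos (abs_pos.mpr hsim)
  obtain ⟨n, hn⟩ := exists_nat_gt ((|J| + (‖A‖)^2 * max (‖s‖) 1 / m₀) / |K|)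
  have hKpos : 0 < |K| := abs_pos.mpr hK
  have hnK : |J| + (‖A‖)^2 * max (‖s‖) 1 / m₀ < n * |K| := by
    rw [div_lt_iff₀ hKpos] at hn
    linarith
  have hJK : (‖A‖)^2 * max (‖s‖) 1 < m₀ * |J + n * K| := by
    have h1 : (n : ℝ) * |K| = |(n : ℝ) * K| := by
      rw [abs_mul, Nat.abs_cast]
    have h2 : |(n:ℝ) * K| ≤ |J + n * K| + |J| := by
      calc |(n:ℝ) * K| = |(J + n * K) + (-J)| := by ring_nf
        _ ≤ |J + n * K| + |(-J)| := abs_add_le _ _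
        _ = |J + n * K| + |J| := by rw [abs_neg]
      
    have h3 : (‖A‖)^2 * max (‖s‖) 1 / m₀ < |J + n * K| := by
      rw [h1] at hnK
      linarith
    rw [div_lt_iff₀ hm₀pos] at h3
    linarith [h3]
  have hJKpos : 0 < |J + n * K| := by
    have h0 : 0 ≤ (‖A‖)^2 * max (‖s‖) 1 :=
      mul_nonneg (sq_nonneg _) (le_trans zero_le_one (le_max_right _ _))
    nlinarith
  -- the vector E and second projection
  set E : ℂ := dA + (n : ℂ) * B with hE
  have hconjE : (A * (starRingEnd ℂ) E).im = J + n * K := by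
    have h1 : A * (starRingEnd ℂ) E
        = A * (starRingEnd ℂ) dA + ((n:ℕ):ℂ) * (A * (starRingEnd ℂ) B) := by
      rw [hE, map_add, map_mul, Complex.conj_natCast]
      ring
    rw [h1, Complex.add_im]
    have h2 : (((((n:ℕ):ℂ))) * (A * (starRingEnd ℂ) B)).im
        = (n:ℝ) * (A * (starRingEnd ℂ) B).im := by
      simp [Complex.mul_im]
    rw [h2, ← hJdef, ← hKdef]
  have hEne : E ≠ 0 := by
    intro h0
    rw [h0] at hconjE
    simp at hconjE
    rw [← hconjE] at hJKpos
    simp at hJKpos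
  set σ : ℂ := -A / E with hσ
  have hnormSqE : 0 < Complex.normSq E := Complex.normSq_pos.mpr hEne
  have hσim : σ.im = -(J + n * K) / Complex.normSq E := by
    rw [hσ, Complex.div_im, ← hconjE]
    rw [Complex.mul_im]
    simp [Complex.conj_re, Complex.conj_im]
    ring
  have hσimne : σ.im ≠ 0 := by
    rw [hσim]
    intro h0
    rcases div_eq_zero_iff.mp h0 with h1 | h1
    · rw [neg_eq_zero] at h1
      rw [h1] at hJKpos
      simp at hJKpos
    · linarith [hnormSqE]
  have hC : (‖σ‖)^2 * max (‖s‖) 1 < min 1 |s.im| * |σ.im| := by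
    have habsσ : (‖σ‖)^2 = (‖A‖)^2 / Complex.normSq E := by
      rw [hσ, norm_div, norm_neg, div_pow, Complex.sq_norm E]
    have habsim : |σ.im| = |J + n * K| / Complex.normSq E := by
      rw [hσim, abs_div, abs_neg, abs_of_pos hnormSqE]
    rw [habsσ, habsim, ← hm₀]
    rw [div_mul_eq_mul_div, ← mul_div_assoc]
    rw [div_lt_div_iff₀ hnormSqE hnormSqE]
    exact mul_lt_mul_of_pos_right hJK hnormSqE
  -- the lattice generators and subgroup memberships
  set γn : ℂ × ℂ := δ 0 + (n : ℤ) • δ 1 with hγn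
  have hγnne : γn ≠ 0 := by
    intro h0
    have hall := Fintype.linearIndependent_iff.mp hindep ![1, ((n : ℤ) : ℝ), 0] ?_
    · simpa using hall 0
    · rw [Fin.sum_univ_three]
      simp only [Matrix.cons_val_zero, Matrix.cons_val_one, Matrix.head_cons,
        Matrix.cons_val_two, Matrix.tail_cons, one_smul, zero_smul, add_zero]
      rw [show (((n:ℤ):ℝ)) • δ 1 = (n : ℤ) • δ 1 from Int.cast_smul_eq_zsmul ℝ _ _]
      exact h0
  set g : (ℂ × ℂ) →ₗ[ℂ] ℂ := crossQ10 γn with hg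
  set g2 : ℂ := g (δ 1) with hg2
  set g3 : ℂ := g (δ 2) with hg3
  have hgγn : g γn = 0 := crossQ10_self _
  have hgδ0 : g (δ 0) = -((n : ℤ) • g2) := by
    have h' : g (δ 0) + (n : ℤ) • g2 = 0 := by
      rw [hg2, ← map_zsmul g, ← map_add, ← hγn, hgγn]
    exact eq_neg_of_add_eq_zero_left h'
  have hrelg : B * g (δ 0) = dA * g2 + A * g3 := by
    have := congrArg g hrel
    rw [map_smul, map_add, map_smul, map_smul] at this
    simpa [smul_eq_mul] using this
  have hEg : E * g2 = -A * g3 := by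
    have h1 : g (δ 0) = -((n : ℂ) * g2) := by
      rw [hgδ0]
      rw [zsmul_eq_mul]
      push_cast
      ring
    rw [h1] at hrelg
    rw [hE]
    linear_combination -hrelg
  have hg3ne : g3 ≠ 0 := by
    intro h0
    have hg2z : g2 = 0 := by
      have : E * g2 = 0 := by rw [hEg, h0, mul_zero]
      exact (mul_eq_zero.mp this).resolve_left hEne
    rw [hg2] at hg2z
    rw [hg3] at h0
    obtain ⟨c1, hc1⟩ := crossQ10_eq_zero hγnne hg2z
    obtain ⟨c2, hc2⟩ := crossQ10_eq_zero hγnne h0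
    apply hBne
    have hBexp : B = (δ 1).2 * (δ 2).1 - (δ 1).1 * (δ 2).2 := rfl
    rw [hBexp, hc1, hc2]
    simp only [Prod.smul_fst, Prod.smul_snd, smul_eq_mul]
    ring
  have hσg : g2 = σ * g3 := by
    rw [hσ]
    field_simp
    linear_combination hEg
  -- memberships
  have hmem1 : ∀ x : ℂ, x ∈ Γ.map f.toAddMonoidHom ↔ ∃ a b : ℤ, x = a • A + b • B := by
    intro x
    constructor
    · rintro ⟨γ, hγ, rfl⟩
      obtain ⟨k, hk⟩ := hmemΓ γ hγ
      refine ⟨k 0, k 2, ?_⟩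
      show f γ = _
      rw [hk, map_add, map_add, map_zsmul, map_zsmul, map_zsmul, hfδ1]
      rw [← hA, ← hB]
      simp
    · rintro ⟨a, b, rfl⟩
      refine ⟨a • δ 0 + b • δ 2, ?_, ?_⟩
      · exact add_mem (AddSubgroup.zsmul_mem Γ (hδΓ 0) a) (AddSubgroup.zsmul_mem Γ (hδΓ 2) b)
      · show f _ = _
        rw [map_add, map_zsmul, map_zsmul, ← hA, ← hB]
  have hmem2 : ∀ x : ℂ, x ∈ Γ.map g.toAddMonoidHom ↔ ∃ a b : ℤ, x = a • g2 + b • g3 := by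
    intro x
    constructor
    · rintro ⟨γ, hγ, rfl⟩
      obtain ⟨k, hk⟩ := hmemΓ γ hγ
      refine ⟨k 1 - k 0 * n, k 2, ?_⟩
      show g γ = _
      rw [hk, map_add, map_add, map_zsmul, map_zsmul, map_zsmul, hgδ0, ← hg2, ← hg3]
      simp only [smul_neg, zsmul_eq_mul]
      push_cast
      ring
    · rintro ⟨a, b, rfl⟩
      refine ⟨a • δ 1 + b • δ 2, ?_, ?_⟩
      · exact add_mem (AddSubgroup.zsmul_mem Γ (hδΓ 1) a) (AddSubgroup.zsmul_mem Γ (hδΓ 2) b)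
      · show g _ = _
        rw [map_add, map_zsmul, map_zsmul, ← hg2, ← hg3]
  -- independence of g2 g3
  have hg23ind : LinearIndependent ℝ ![g2, g3] := by
    apply indep_of_imMulConj
    rw [hσg, mul_assoc, Complex.mul_conj]
    have : (σ * ((Complex.normSq g3 : ℝ) : ℂ)).im = σ.im * Complex.normSq g3 := by
      simp [Complex.mul_im]
    rw [this]
    exact mul_ne_zero hσimne (Complex.normSq_pos.mpr hg3ne).ne'
  obtain ⟨hd1, hb1⟩ := lattice_packageQ10 hABind (Γ.map f.toAddMonoidHom) hmem1
  obtain ⟨hd2, hb2⟩ := lattice_packageQ10 hg23ind (Γ.map g.toAddMonoidHom) hmem2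
  refine ⟨f, g, crossQ10_surjective hδ1ne, crossQ10_surjective hγnne, hd1, hb1, hd2, hb2, ?_⟩
  rintro ⟨μ, hμ0, hset⟩
  set μ' : ℂ := μ * B / g3 with hμ'def
  have hμ'ne : μ' ≠ 0 := div_ne_zero (mul_ne_zero hμ0 hBne) hg3ne
  -- extract the three relations
  have himg : ∀ y : ℂ, y ∈ Γ.map g.toAddMonoidHom → ∃ x : ℂ, x ∈ Γ.map f.toAddMonoidHom ∧ μ * x = y := by
    intro y hy
    have : y ∈ (fun x => μ * x) '' ((Γ.map f.toAddMonoidHom : AddSubgroup ℂ) : Set ℂ) := by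
      rw [hset]; exact hy
    obtain ⟨x, hx, hxy⟩ := this
    exact ⟨x, hx, hxy⟩
  have hfwd : ∀ x : ℂ, x ∈ Γ.map f.toAddMonoidHom → μ * x ∈ Γ.map g.toAddMonoidHom := by
    intro x hx
    rw [← SetLike.mem_coe, ← hset]
    exact ⟨x, hx, rfl⟩
  have h1 : ∃ a b : ℤ, μ' * ((a:ℂ) * s + b) = σ := by
    obtain ⟨x, hx, hxy⟩ := himg g2 ((hmem2 g2).mpr ⟨1, 0, by simp⟩)
    obtain ⟨a, b, rfl⟩ := (hmem1 x).mp hx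
    refine ⟨-a, b, ?_⟩
    have hcomb : (a : ℤ) • A + (b : ℤ) • B = (((-a : ℤ) : ℂ) * s + ((b : ℤ) : ℂ)) * B := by
      rw [zsmul_eq_mul, zsmul_eq_mul, ← hsB]
      push_cast
      ring
    rw [hcomb] at hxy
    rw [hμ'def, div_mul_eq_mul_div, div_eq_iff hg3ne]
    linear_combination hxy + hσg
  have h2 : ∃ a b : ℤ, -s * μ' = (a:ℂ) * σ + b := by
    have hxA : μ * A ∈ Γ.map g.toAddMonoidHom := hfwd A ((hmem1 A).mpr ⟨1, 0, by simp⟩)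
    obtain ⟨a, b, hab⟩ := (hmem2 (μ * A)).mp hxA
    refine ⟨a, b, ?_⟩
    rw [zsmul_eq_mul, zsmul_eq_mul] at hab
    rw [hμ'def, ← mul_div_assoc, div_eq_iff hg3ne]
    linear_combination hab + μ * hsB + (a:ℂ) * hσg
  have h3 : ∃ a b : ℤ, μ' = (a:ℂ) * σ + b := by
    have hxB : μ * B ∈ Γ.map g.toAddMonoidHom := hfwd B ((hmem1 B).mpr ⟨0, 1, by simp⟩)
    obtain ⟨a, b, hab⟩ := (hmem2 (μ * B)).mp hxB
    refine ⟨a, b, ?_⟩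
    rw [zsmul_eq_mul, zsmul_eq_mul] at hab
    rw [hμ'def, div_eq_iff hg3ne]
    linear_combination hab + (a:ℂ) * hσg
  exact coreQ10 s σ hC μ' hμ'ne h1 h2 h3

end AuxQ10
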